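/- If ξ, ψ, θ are differentiable and satisfy ξ' = u·ξ − x·θ, ψ' = −u·ψ + y·θ, θ' = 2(x·ψ − y·ξ), then the quantity 4ξψ + θ² is constant (its derivative vanishes identically). -/

import Mathlib

theorem discriminant_is_constant
    (ξ ψ θ x y u : ℝ → ℂ)
    (hξ : ∀ t, HasDerivAt ξ (u t * ξ t - x t * θ t) t)
    (hψ : ∀ t, HasDerivAt ψ (-(u t) * ψ t + y t * θ t) t)
    (hθ : ∀ t, HasDerivAt θ (2 * (x t * ψ t - y t * ξ t)) t) :
    ∀ t, HasDerivAt (fun t => 4 * ξ t * ψ t + (θ t) ^ 2) 0 t := by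
  intro t
  have h1 : HasDerivAt (fun s => 4 * ξ s * ψ s)
      (4 * (u t * ξ t - x t * θ t) * ψ t + 4 * ξ t * (-(u t) * ψ t + y t * θ t)) t := by
    simpa [mul_assoc, mul_comm, mul_left_comm] using
      (((hξ t).const_mul (4:ℂ)).fun_mul (hψ t))
  have h2 : HasDerivAt (fun s => (θ s) ^ 2)
      (2 * (x t * ψ t - y t * ξ t) * θ t + θ t * (2 * (x t * ψ t - y t * ξ t))) t := by
    simpa [sq] using (hθ t).fun_mul (hθ t)
  have h := h1.fun_add h2
  exact h.congr_deriv (by ring)
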